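/- Let F = F(x,y,z) be free of rank 3, let w₁,…,w_d ∈ ⟨x,y⟩ freely generate a free subgroup of rank d (d ≥ 2), and let Lᵢ be the normal closure of z⁻¹wᵢ in F. Then the iterated commutator [z⁻¹w₁, z⁻¹w₂, …, z⁻¹w_{d−1}] lies in ⋂_{j=1}^{d−1} Lⱼ but not in L_d; in particular ⋂_{j ≠ d} Lⱼ is not contained in L_d. -/

import Mathlib

open scoped commutatorElement

/-- Left-normed iterated commutator `[[…[g, h₁], h₂], …, hₖ]`. -/
def leftNormedCommutator {G : Type*} [Group G] : G → List G → G
  | g, [] => g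
  | g, h :: rest => leftNormedCommutator ⁅g, h⁆ rest

private lemma lnc_mem_head {G : Type*} [Group G] (N : Subgroup G) [hN : N.Normal] :
    ∀ (l : List G) {g : G}, g ∈ N → leftNormedCommutator g l ∈ N
  | [], _, hg => hg
  | h :: rest, g, hg => lnc_mem_head N rest (by
      have he : ⁅g, h⁆ = g * (h * g⁻¹ * h⁻¹) := by group
      rw [he]
      exact N.mul_mem hg (by simpa [mul_assoc] using hN.conj_mem _ (N.inv_mem hg) h))

private lemma lnc_mem_list {G : Type*} [Group G] (N : Subgroup G) [hN : N.Normal] :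
    ∀ (l : List G) (g h : G), h ∈ l → h ∈ N → leftNormedCommutator g l ∈ N
  | [], _, _, hl, _ => absurd hl (List.not_mem_nil)
  | a :: rest, g, h, hl, hh => by
      rcases List.mem_cons.1 hl with rfl | hl'
      · show leftNormedCommutator ⁅g, h⁆ rest ∈ N
        apply lnc_mem_head
        have he : ⁅g, h⁆ = (g * h * g⁻¹) * h⁻¹ := by group
        rw [he]
        exact N.mul_mem (by simpa [mul_assoc] using hN.conj_mem _ hh g) (N.inv_mem hh)
      · exact lnc_mem_list N rest ⁅g, a⁆ h hl' hh

private lemma map_lnc {G H : Type*} [Group G] [Group H] (f : G →* H) :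
    ∀ (l : List G) (g : G),
      f (leftNormedCommutator g l) = leftNormedCommutator (f g) (l.map f)
  | [], _ => rfl
  | a :: rest, g => by
      show f (leftNormedCommutator ⁅g, a⁆ rest) = leftNormedCommutator ⁅f g, f a⁆ (rest.map f)
      rw [map_lnc f rest, map_commutatorElement]

private lemma reduce_eq_self_of_chain {α : Type*} [DecidableEq α] :
    ∀ (L : List (α × Bool)), List.Chain' (fun a b => ¬(a.1 = b.1 ∧ a.2 = !b.2)) L →
      FreeGroup.reduce L = L
  | [], _ => rfl
  | x :: L, h => by
      rw [FreeGroup.reduce.cons, reduce_eq_self_of_chain L h.tail]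
      cases L with
      | nil => rfl
      | cons hd tl =>
        have hR : ¬(x.1 = hd.1 ∧ x.2 = !hd.2) := (List.isChain_cons_cons.1 h).1
        simp only [if_neg hR]

private lemma chain'_reduce {α : Type*} [DecidableEq α] :
    ∀ (L : List (α × Bool)),
      List.Chain' (fun a b => ¬(a.1 = b.1 ∧ a.2 = !b.2)) (FreeGroup.reduce L)
  | [] => List.isChain_nil
  | x :: L => by
      have ih := chain'_reduce L
      rw [FreeGroup.reduce.cons]
      rcases h : FreeGroup.reduce L with _ | ⟨hd, tl⟩
      · exact List.isChain_singleton _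
      · rw [h] at ih
        by_cases hc : x.1 = hd.1 ∧ x.2 = !hd.2
        · simp only [if_pos hc]; exact ih.tail
        · simp only [if_neg hc]
          exact List.isChain_cons_cons.2 ⟨hc, ih⟩

private lemma chain'_toWord {α : Type*} [DecidableEq α] (g : FreeGroup α) :
    List.Chain' (fun a b => ¬(a.1 = b.1 ∧ a.2 = !b.2)) g.toWord := by
  rw [← FreeGroup.reduce_toWord]
  exact chain'_reduce _

private lemma chain'_append_of {α : Type*} {R : α → α → Prop} {l₁ l₂ : List α}
    (h1 : List.Chain' R l₁) (h2 : List.Chain' R l₂)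
    (h : ∀ x ∈ l₁, ∀ y ∈ l₂, R x y) : List.Chain' R (l₁ ++ l₂) :=
  List.isChain_append.2 ⟨h1, h2, fun x hx y hy =>
    h x (List.mem_of_mem_getLast? hx) y (List.mem_of_mem_head? hy)⟩

private lemma comm_toWord {α : Type*} [DecidableEq α] (g : FreeGroup α) (a : α)
    (hne : g.toWord ≠ []) (ha : ∀ p ∈ g.toWord, p.1 ≠ a) :
    (⁅g, FreeGroup.of a⁆).toWord
      = g.toWord ++ (a, true) :: (g⁻¹.toWord ++ [(a, false)]) := by
  have hof : (FreeGroup.of a : FreeGroup α) = FreeGroup.mk [(a, true)] := rfl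
  have hof' : (FreeGroup.of a : FreeGroup α)⁻¹ = FreeGroup.mk [(a, false)] := by
    rw [hof, FreeGroup.inv_mk]; rfl
  have h1 : ⁅g, FreeGroup.of a⁆
      = FreeGroup.mk (g.toWord ++ (a, true) :: (g⁻¹.toWord ++ [(a, false)])) := by
    calc ⁅g, FreeGroup.of a⁆
        = FreeGroup.mk g.toWord * FreeGroup.mk [(a, true)] * FreeGroup.mk g⁻¹.toWord *
            FreeGroup.mk [(a, false)] := by
          rw [FreeGroup.mk_toWord, FreeGroup.mk_toWord, ← hof, ← hof', commutatorElement_def]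
      _ = _ := by rw [FreeGroup.mul_mk, FreeGroup.mul_mk, FreeGroup.mul_mk]; simp
  have hinv : ∀ p ∈ g⁻¹.toWord, p.1 ≠ a := by
    intro p hp
    rw [FreeGroup.toWord_inv, FreeGroup.invRev] at hp
    simp only [List.mem_reverse, List.mem_map] at hp
    obtain ⟨q, hq, rfl⟩ := hp
    exact ha q hq
  have hVne : g⁻¹.toWord ≠ [] := by
    rw [FreeGroup.toWord_inv, FreeGroup.invRev]
    simpa using hne
  rw [h1, FreeGroup.toWord_mk]
  apply reduce_eq_self_of_chain
  rcases hV : g⁻¹.toWord with _ | ⟨v, V'⟩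
  · exact absurd hV hVne
  have hchainV : List.Chain' (fun p q => ¬(p.1 = q.1 ∧ p.2 = !q.2)) (v :: V') := by
    rw [← hV]; exact chain'_toWord _
  refine List.isChain_append.2 ?_
  refine ⟨chain'_toWord g, ?_, ?_⟩
  · rw [List.cons_append, List.isChain_cons_cons]
    constructor
    · have : v.1 ≠ a := hinv v (by rw [hV]; exact List.mem_cons_self)
      exact fun hc => this hc.1.symm
    · rw [← List.cons_append]
      apply chain'_append_of hchainV (List.isChain_singleton _)
      intro x hx y hy
      have hxa : x.1 ≠ a := hinv x (by rw [hV]; exact hx)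
      rcases List.mem_singleton.1 hy with rfl
      exact fun hc => hxa hc.1
  · intro x hx y hy
    simp only [List.head?_cons, Option.mem_def, Option.some.injEq] at hy
    subst hy
    exact fun hc => ha x (List.mem_of_mem_getLast? hx) hc.1

private lemma lnc_word_ne_nil {α : Type*} [DecidableEq α] :
    ∀ (l : List α) (g : FreeGroup α), g.toWord ≠ [] → (∀ p ∈ g.toWord, p.1 ∉ l) → l.Nodup →
      (leftNormedCommutator g (l.map FreeGroup.of)).toWord ≠ []
  | [], _, hne, _, _ => hne
  | a :: rest, g, hne, hl, hnd => by
      have ha : ∀ p ∈ g.toWord, p.1 ≠ a := fun p hp h =>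
        hl p hp (h ▸ List.mem_cons_self)
      have hW := comm_toWord g a hne ha
      have hne' : (⁅g, FreeGroup.of a⁆).toWord ≠ [] := by
        rw [hW]; simp
      have hanr : a ∉ rest := (List.nodup_cons.1 hnd).1
      have hl' : ∀ p ∈ (⁅g, FreeGroup.of a⁆).toWord, p.1 ∉ rest := by
        intro p hp
        rw [hW] at hp
        simp only [List.mem_append, List.mem_cons, List.mem_singleton] at hp
        rcases hp with hp | hp | hp | hp
        · exact fun h => hl p hp (List.mem_cons_of_mem _ h)
        · subst hp; exact hanr
        · rw [FreeGroup.toWord_inv, FreeGroup.invRev] at hp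
          simp only [List.mem_reverse, List.mem_map] at hp
          obtain ⟨q, hq, rfl⟩ := hp
          exact fun h => hl q hq (List.mem_cons_of_mem _ h)
        · rcases hp with rfl | hp
          · exact hanr
          · exact absurd hp (List.not_mem_nil)
      show (leftNormedCommutator ⁅g, FreeGroup.of a⁆ (rest.map FreeGroup.of)).toWord ≠ []
      exact lnc_word_ne_nil rest _ hne' hl' (List.nodup_cons.1 hnd).2

private lemma lnc_ne_one {α : Type*} [DecidableEq α] (l : List α) (g : FreeGroup α)
    (hne : g.toWord ≠ []) (hl : ∀ p ∈ g.toWord, p.1 ∉ l) (hnd : l.Nodup) :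
    leftNormedCommutator g (l.map FreeGroup.of) ≠ 1 := fun h => by
  have := lnc_word_ne_nil l g hne hl hnd
  rw [h, FreeGroup.toWord_one] at this
  exact this rfl


set_option maxHeartbeats 1000000 in
/-- With `F` free on `{x,y,z}` (`z = of 2` in `FreeGroup (Fin 3)`),
`w₁, …, w_d ∈ ⟨x,y⟩` freely generating a free subgroup of rank `d ≥ 2`, and `Lᵢ` the
normal closure of `z⁻¹wᵢ`, the iterated commutator `[z⁻¹w₁, …, z⁻¹w_{d-1}]` lies in
`⋂_{j=1}^{d-1} Lⱼ` but not in `L_d`; in particular `⋂_{j ≠ d} Lⱼ ⊄ L_d`.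
(Indices are 0-based: `w i` for `i : Fin d`, `L_d` is `L ⟨d-1, _⟩`.) -/
theorem stmt_9 {d : ℕ} (hd : 2 ≤ d) (w : Fin d → FreeGroup (Fin 3))
    (hw : ∀ i, w i ∈ Subgroup.closure {FreeGroup.of (0 : Fin 3), FreeGroup.of 1})
    (hfree : Function.Injective (FreeGroup.lift w : FreeGroup (Fin d) →* FreeGroup (Fin 3)))
    (L : Fin d → Subgroup (FreeGroup (Fin 3)))
    (hL : ∀ i, L i = Subgroup.normalClosure {(FreeGroup.of (2 : Fin 3))⁻¹ * w i})
    (c : FreeGroup (Fin 3))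
    (hc : c = leftNormedCommutator
      ((FreeGroup.of (2 : Fin 3))⁻¹ * w ⟨0, by omega⟩)
      (List.ofFn fun k : Fin (d - 2) =>
        (FreeGroup.of (2 : Fin 3))⁻¹ * w ⟨k + 1, by omega⟩)) :
    (∀ j : Fin d, (j : ℕ) < d - 1 → c ∈ L j) ∧
    c ∉ L ⟨d - 1, by omega⟩ ∧
    ¬ (⨅ j : {j : Fin d // (j : ℕ) < d - 1}, L j) ≤ L ⟨d - 1, by omega⟩ := by
  -- some notation
  have hd1 : d - 1 < d := by omega
  set i0 : Fin d := ⟨0, by omega⟩ with hi0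
  set last : Fin d := ⟨d - 1, by omega⟩ with hlast
  set idx : Fin (d - 2) → Fin d := fun k => ⟨(k : ℕ) + 1, by omega⟩ with hidx
  -- Part 1: membership
  have hmem : ∀ j : Fin d, (j : ℕ) < d - 1 → c ∈ L j := by
    intro j hj
    rw [hL j, hc]
    haveI : (Subgroup.normalClosure {(FreeGroup.of (2 : Fin 3))⁻¹ * w j}).Normal :=
      Subgroup.normalClosure_normal
    have hgen : (FreeGroup.of (2 : Fin 3))⁻¹ * w j ∈
        Subgroup.normalClosure {(FreeGroup.of (2 : Fin 3))⁻¹ * w j} :=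
      Subgroup.subset_normalClosure rfl
    rcases Nat.eq_zero_or_pos (j : ℕ) with h0 | hpos
    · have hj0 : i0 = j := Fin.ext (by simp [hi0, h0])
      rw [hj0]
      exact lnc_mem_head _ _ hgen
    · refine lnc_mem_list _ _ _ ((FreeGroup.of (2 : Fin 3))⁻¹ * w j) ?_ hgen
      refine List.mem_ofFn.2 ⟨⟨(j : ℕ) - 1, by omega⟩, ?_⟩
      have : (⟨((⟨(j : ℕ) - 1, by omega⟩ : Fin (d - 2)) : ℕ) + 1, by omega⟩ : Fin d) = j :=
        Fin.ext (by simp; omega)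
      beta_reduce
      rw [this]
  -- The retraction φ
  set φ : FreeGroup (Fin 3) →* FreeGroup (Fin 3) :=
    FreeGroup.lift (fun i => if i = 2 then w last else FreeGroup.of i) with hφ
  have hφ0 : φ (FreeGroup.of (0 : Fin 3)) = FreeGroup.of 0 := by
    rw [hφ, FreeGroup.lift_apply_of, if_neg (by decide)]
  have hφ1 : φ (FreeGroup.of (1 : Fin 3)) = FreeGroup.of 1 := by
    rw [hφ, FreeGroup.lift_apply_of, if_neg (by decide)]
  have hφ2 : φ (FreeGroup.of (2 : Fin 3)) = w last := by
    rw [hφ, FreeGroup.lift_apply_of, if_pos rfl]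
  have hφw : ∀ i, φ (w i) = w i := by
    intro i
    refine Subgroup.closure_induction (fun x hx => ?_) (by simp)
      (fun x y _ _ hx hy => by rw [map_mul, hx, hy])
      (fun x _ hx => by rw [map_inv, hx]) (hw i)
    simp only [Set.mem_insert_iff, Set.mem_singleton_iff] at hx
    rcases hx with rfl | rfl
    · exact hφ0
    · exact hφ1
  have hker : L ⟨d - 1, by omega⟩ ≤ φ.ker := by
    rw [hL]
    apply Subgroup.normalClosure_le_normal
    intro x hx
    rw [Set.mem_singleton_iff] at hx
    subst hx
    simp only [SetLike.mem_coe, MonoidHom.mem_ker, map_mul, map_inv, hφ2]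
    rw [hφw]
    exact inv_mul_cancel _
  -- φ c as image under lift w
  have hφc : φ c = FreeGroup.lift w (leftNormedCommutator
      ((FreeGroup.of last)⁻¹ * FreeGroup.of i0)
      (List.ofFn fun k : Fin (d - 2) => (FreeGroup.of last)⁻¹ * FreeGroup.of (idx k))) := by
    rw [hc, map_lnc, map_lnc, List.map_ofFn, List.map_ofFn]
    congr 1
    · simp only [map_mul, map_inv, hφ2, FreeGroup.lift_apply_of]
      rw [hφw]
    · congr 1
      funext k
      simp only [Function.comp_apply, map_mul, map_inv, hφ2, FreeGroup.lift_apply_of]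
      rw [hφw]
  -- D is nontrivial
  have hDne : leftNormedCommutator
      ((FreeGroup.of last)⁻¹ * FreeGroup.of i0)
      (List.ofFn fun k : Fin (d - 2) => (FreeGroup.of last)⁻¹ * FreeGroup.of (idx k)) ≠ 1 := by
    intro h1
    set π : FreeGroup (Fin d) →* FreeGroup (Fin d) :=
      FreeGroup.lift (fun i => if (i : ℕ) = d - 1 then 1 else FreeGroup.of i) with hπdef
    have hπlast : π (FreeGroup.of last) = 1 := by
      rw [hπdef, FreeGroup.lift_apply_of, if_pos rfl]
    have hπ : π (leftNormedCommutator
        ((FreeGroup.of last)⁻¹ * FreeGroup.of i0)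
        (List.ofFn fun k : Fin (d - 2) => (FreeGroup.of last)⁻¹ * FreeGroup.of (idx k)))
        = leftNormedCommutator (FreeGroup.of i0)
            ((List.ofFn idx).map FreeGroup.of) := by
      rw [map_lnc, List.map_ofFn, List.map_ofFn]
      congr 1
      · have h0 : ¬((i0 : ℕ) = d - 1) := by simp [hi0]; omega
        simp only [map_mul, map_inv, hπlast, hπdef, FreeGroup.lift_apply_of]
        rw [if_neg h0]
        simp [hlast]
      · congr 1
        funext k
        have hk : ¬(((idx k : Fin d) : ℕ) = d - 1) := by
          have := k.2; simp [hidx]; omega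
        simp only [Function.comp_apply, map_mul, map_inv, hπlast, hπdef, FreeGroup.lift_apply_of]
        rw [if_neg hk]
        simp [hlast]
    have hE : leftNormedCommutator (FreeGroup.of i0) ((List.ofFn idx).map FreeGroup.of) ≠ 1 := by
      apply lnc_ne_one
      · simp [FreeGroup.toWord_of]
      · intro p hp
        rw [FreeGroup.toWord_of, List.mem_singleton] at hp
        subst hp
        simp only [List.mem_ofFn, Set.mem_range, not_exists]
        intro k hk
        have := congrArg Fin.val hk
        simp [hidx, hi0] at this
      · exact List.nodup_ofFn.2 (fun a b hab => by
          have := congrArg Fin.val hab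
          simp [hidx] at this
          exact Fin.ext this)
    exact hE (by rw [← hπ, h1, map_one])
  -- c ∉ L last
  have hnot : c ∉ L ⟨d - 1, by omega⟩ := by
    intro hcL
    have h1 : φ c = 1 := hker hcL
    rw [hφc] at h1
    have := hfree (by rw [h1, map_one] : FreeGroup.lift w _ = FreeGroup.lift w 1)
    exact hDne this
  refine ⟨hmem, hnot, fun hle => hnot (hle ?_)⟩
  rw [Subgroup.mem_iInf]
  exact fun j => hmem j j.2
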